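/- Assume G is second countable. Let K be a compact neighbourhood of the identity in G, let S be a K-slice in X, and let B ⊆ boxint(S) be a subset of S which is regular open in S (i.e. B equals the interior, taken in S, of its closure). Denote by cl(B) the closure of B (in S, equivalently in X). Then: (i) boxint(cl(B)) = B; (ii) the tube boundary of cl(B) equals ∂_S B, the boundary of B in S; (iii) the boundary of the tube K·cl(B) in X satisfies ∂(K·cl(B)) = (K·cl(B)) \ (K°·B) = (∂K)·cl(B) ∪ K·(∂_S B). -/

import Mathlib

open scoped Pointwise

open Filter Set Topology

/-- `S` is a `K`-slice for the action of `G` on `X`: `S` is compact and the action map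
`K × S → X, (g, x) ↦ g • x` is injective. -/
def IsSlice {G X : Type*} [Group G] [TopologicalSpace G] [TopologicalSpace X]
    [MulAction G X] (K : Set G) (S : Set X) : Prop :=
  IsCompact S ∧ Set.InjOn (fun p : G × X => p.1 • p.2) (K ×ˢ S)

/-- Since a slice `S` is compact, hence closed, in the Hausdorff space `X`, for a subset
`B ⊆ S` the interior of `B` relative to the subspace `S` is `S \ closure (S \ B)`, the
closure of `B` relative to `S` is `closure B`, and the boundary of `B` relative to `S` is
`closure B ∩ closure (S \ B)`.

**Tubes over regular open subsets of a slice.** Assume `G` is second countable.  Let `S` be a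
`K`-slice, and let `B ⊆ boxint S = S ∩ (K·S)°` be regular open in `S`, i.e. `B` equals the
interior, relative to `S`, of its closure.  Then
(i) `boxint (closure B) = B`;
(ii) the tube boundary `closure B \ boxint (closure B)` equals the boundary `∂_S B` of `B`
in `S`;
(iii) `∂(K·closure B) = (K·closure B) \ (K°·B) = (∂K)·closure B ∪ K·(∂_S B)`. -/
theorem stmt_5 {G : Type*} [Group G] [TopologicalSpace G] [IsTopologicalGroup G]
    [LocallyCompactSpace G] [T2Space G] [SecondCountableTopology G]
    {X : Type*} [TopologicalSpace X] [LocallyCompactSpace X] [T2Space X]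
    [MulAction G X] [ContinuousSMul G X]
    (K : Set G) (hKc : IsCompact K) (hKn : K ∈ nhds (1 : G))
    (S : Set X) (hS : IsSlice K S)
    (B : Set X) (hBsub : B ⊆ S ∩ interior (K • S))
    (hBreg : B = S \ closure (S \ closure B)) :
    closure B ∩ interior (K • closure B) = B ∧
    closure B \ (closure B ∩ interior (K • closure B)) = closure B ∩ closure (S \ B) ∧
    frontier (K • closure B) = (K • closure B) \ (interior K • B) ∧
    frontier (K • closure B)
      = frontier K • closure B ∪ K • (closure B ∩ closure (S \ B)) := by
  obtain ⟨hSc, hinj⟩ := hS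
  have hScl : IsClosed S := hSc.isClosed
  set T := closure B with hT
  have hBS : B ⊆ S := fun x hx => (hBsub hx).1
  have hTS : T ⊆ S := closure_minimal hBS hScl
  have hTc : IsCompact T := hSc.of_isClosed_subset isClosed_closure hTS
  have hBT : B ⊆ T := subset_closure
  have h1K : (1 : G) ∈ K := mem_of_mem_nhds hKn
  have h1Ki : (1 : G) ∈ interior K := mem_interior_iff_mem_nhds.2 hKn
  -- `B` is open in `S`
  set U : Set X := (closure (S \ T))ᶜ with hU
  have hUo : IsOpen U := isClosed_closure.isOpen_compl
  have hBU : B = S ∩ U := by rw [hBreg, Set.diff_eq]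
  -- consequence of injectivity
  have hinj' : ∀ g ∈ K, ∀ u ∈ S, ∀ k ∈ K, ∀ v ∈ S, g • u = k • v → g = k ∧ u = v := by
    intro g hg u hu k hk v hv h
    have h2 := hinj (Set.mk_mem_prod hg hu) (Set.mk_mem_prod hk hv) h
    exact ⟨congrArg Prod.fst h2, congrArg Prod.snd h2⟩
  -- Lemma A : points of `B` are interior points of small tubes over `B`
  have lemA : ∀ V : Set G, IsOpen V → (1 : G) ∈ V → ∀ x ∈ B, x ∈ interior ((K ∩ V) • B) := by
    intro V hVo hV1 x hx
    set C : Set (G × X) := (K ×ˢ S) \ (V ×ˢ U) with hC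
    have hCc : IsCompact C := (hKc.prod hSc).diff (hVo.prod hUo)
    have hfC : IsCompact ((fun p : G × X => p.1 • p.2) '' C) := hCc.image continuous_smul
    have hxC : x ∉ (fun p : G × X => p.1 • p.2) '' C := by
      rintro ⟨⟨k, s⟩, ⟨⟨hkK, hsS⟩, hks⟩, hfx⟩
      have h1x : k • s = (1 : G) • x := by rw [one_smul]; exact hfx
      obtain ⟨hk1, hsx⟩ := hinj' k hkK s hsS 1 h1K x (hBS hx) h1x
      refine hks ⟨?_, ?_⟩
      · rw [hk1]; exact hV1
      · rw [hsx]; exact (hBU ▸ hx).2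
    have hNo : IsOpen (((fun p : G × X => p.1 • p.2) '' C)ᶜ ∩ interior (K • S)) :=
      hfC.isClosed.isOpen_compl.inter isOpen_interior
    have hxN : x ∈ ((fun p : G × X => p.1 • p.2) '' C)ᶜ ∩ interior (K • S) :=
      ⟨hxC, (hBsub hx).2⟩
    have hNsub : ((fun p : G × X => p.1 • p.2) '' C)ᶜ ∩ interior (K • S) ⊆ (K ∩ V) • B := by
      rintro y ⟨hyC, hyint⟩
      obtain ⟨k, hk, s, hs, rfl⟩ := interior_subset hyint
      by_cases hmem : (k, s) ∈ V ×ˢ U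
      · exact Set.smul_mem_smul ⟨hk, hmem.1⟩ (hBU ▸ ⟨hs, hmem.2⟩)
      · exact absurd ⟨(k, s), ⟨⟨hk, hs⟩, hmem⟩, rfl⟩ hyC
    exact mem_interior.2 ⟨_, hNsub, hNo, hxN⟩
  -- Lemma (a) : the slice coordinate of an interior point of the tube lies in `B`
  have lemPa : ∀ g ∈ K, ∀ t ∈ T, g • t ∈ interior (K • T) → t ∈ B := by
    intro g hg t ht hgt
    have hW : IsOpen {s : X | g • s ∈ interior (K • T)} :=
      isOpen_interior.preimage (continuous_const_smul g)
    have htW : t ∈ {s : X | g • s ∈ interior (K • T)} := hgt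
    have hWd : {s : X | g • s ∈ interior (K • T)} ∩ (S \ T) = ∅ := by
      rw [Set.eq_empty_iff_forall_notMem]
      rintro s ⟨hsW, hsS, hsT⟩
      obtain ⟨k, hk, u, hu, hku⟩ := interior_subset hsW
      obtain ⟨-, hsu⟩ := hinj' g hg s hsS k hk u (hTS hu) hku.symm
      exact hsT (hsu ▸ hu)
    have htcl : t ∉ closure (S \ T) := by
      intro hcl
      obtain ⟨s, hs1, hs2⟩ := mem_closure_iff.1 hcl _ hW htW
      exact (Set.eq_empty_iff_forall_notMem.1 hWd s) ⟨hs1, hs2⟩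
    rw [hBreg]
    exact ⟨hTS ht, htcl⟩
  -- Lemma (b) : the group coordinate of an interior point of the tube lies in `interior K`
  have lemPb : ∀ g ∈ K, ∀ t ∈ T, g • t ∈ interior (K • T) → g ∈ interior K := by
    intro g hg t ht hgt
    by_contra hgi
    have hgcl : g ∈ closure Kᶜ := by rw [closure_compl]; exact hgi
    have hF : (nhds g ⊓ 𝓟 Kᶜ).NeBot := mem_closure_iff_clusterPt.1 hgcl
    set F := nhds g ⊓ 𝓟 Kᶜ with hFdef
    set 𝒰 := Ultrafilter.of F with h𝒰
    have h𝒰F : (𝒰 : Filter G) ≤ F := Ultrafilter.of_le F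
    have h𝒰g : (𝒰 : Filter G) ≤ nhds g := h𝒰F.trans inf_le_left
    have h𝒰K : Kᶜ ∈ 𝒰 := h𝒰F (mem_inf_of_right (mem_principal_self Kᶜ))
    have htends : Tendsto (fun h : G => h • t) (𝒰 : Filter G) (nhds (g • t)) :=
      ((continuous_id.smul continuous_const).tendsto g).mono_left h𝒰g
    have hA : {h : G | h • t ∈ K • T} ∈ 𝒰 := by
      have h4 : {h : G | h • t ∈ interior (K • T)} ∈ 𝒰 :=
        htends (isOpen_interior.mem_nhds hgt)
      exact Filter.mem_of_superset h4 fun h hh => show h • t ∈ K • T from interior_subset hh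
    have hsel : ∀ h : G, h • t ∈ K • T → ∃ p : G × X, p ∈ K ×ˢ T ∧ p.1 • p.2 = h • t := by
      intro h hh
      obtain ⟨k, hk, u, hu, hku⟩ := hh
      exact ⟨(k, u), ⟨hk, hu⟩, hku⟩
    haveI : Nonempty X := ⟨t⟩
    haveI : Nonempty G := ⟨1⟩
    choose! p hp1 hp2 using hsel
    have hpmem : K ×ˢ T ∈ Ultrafilter.map p 𝒰 := by
      have h5 : p ⁻¹' (K ×ˢ T) ∈ 𝒰 := Filter.mem_of_superset hA fun h hh => hp1 h hh
      exact h5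
    obtain ⟨q, hqE, hq⟩ := (hKc.prod hTc).ultrafilter_le_nhds (Ultrafilter.map p 𝒰)
      (le_principal_iff.2 hpmem)
    have hqT : Tendsto p (𝒰 : Filter G) (nhds q) := hq
    have htp : Tendsto (fun h : G => (p h).1 • (p h).2) (𝒰 : Filter G) (nhds (q.1 • q.2)) :=
      (continuous_smul.tendsto q).comp hqT
    have heq : (fun h : G => (p h).1 • (p h).2) =ᶠ[(𝒰 : Filter G)] fun h : G => h • t := by
      filter_upwards [hA] with h hh using hp2 h hh
    have hlim : q.1 • q.2 = g • t := tendsto_nhds_unique (htp.congr' heq) htends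
    obtain ⟨hq1, hq2⟩ := hinj' q.1 hqE.1 q.2 (hTS hqE.2) g hg t (hTS ht) hlim
    have hp1t : Tendsto (fun h : G => (p h).1) (𝒰 : Filter G) (nhds g) := by
      have := (continuous_fst.tendsto q).comp hqT
      rwa [hq1] at this
    have hmt : Tendsto (fun h : G => (p h).1⁻¹ * h) (𝒰 : Filter G) (nhds 1) := by
      have h2 : Tendsto (fun h : G => h) (𝒰 : Filter G) (nhds g) := h𝒰g
      have h3 := hp1t.inv.mul h2
      rwa [inv_mul_cancel] at h3
    have hmK : {h : G | (p h).1⁻¹ * h ∈ K} ∈ 𝒰 := hmt hKn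
    have hFalse : ∀ᶠ h in (𝒰 : Filter G), False := by
      filter_upwards [hA, hmK, h𝒰K] with h hh hmk hknot
      have hpu : (p h).1 • (p h).2 = h • t := hp2 h hh
      have hp1h : (p h).1 ∈ K := (hp1 h hh).1
      have hp2h : (p h).2 ∈ T := (hp1 h hh).2
      have hms : ((p h).1⁻¹ * h) • t = (1 : G) • (p h).2 := by
        rw [one_smul, mul_smul, ← hpu, inv_smul_smul]
      obtain ⟨hm1, -⟩ :=
        hinj' ((p h).1⁻¹ * h) hmk t (hTS ht) 1 h1K ((p h).2) (hTS hp2h) hms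
      exact hknot (inv_mul_eq_one.1 hm1 ▸ hp1h)
    obtain ⟨h, hfalse⟩ := hFalse.exists
    exact hfalse
  -- interior of the tube over `T`
  have hIntEq : interior (K • T) = interior K • B := by
    apply Set.Subset.antisymm
    · intro x hx
      obtain ⟨k, hk, u, hu, rfl⟩ := interior_subset hx
      exact Set.smul_mem_smul (lemPb k hk u hu hx) (lemPa k hk u hu hx)
    · rintro x ⟨g, hgK, b, hb, rfl⟩
      set V : Set G := (fun v => g * v) ⁻¹' interior K with hV
      have hVo : IsOpen V := isOpen_interior.preimage (continuous_mul_left g)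
      have hV1 : (1 : G) ∈ V := by
        show g * 1 ∈ interior K
        rwa [mul_one]
      have hb' := lemA V hVo hV1 b hb
      have hsub : g • ((K ∩ V) • B) ⊆ K • T := by
        rintro y ⟨z, hz, rfl⟩
        obtain ⟨v, hv, b', hb'', rfl⟩ := hz
        show g • (v • b') ∈ K • T
        rw [smul_smul]
        exact Set.smul_mem_smul (interior_subset hv.2) (hBT hb'')
      have hopen : IsOpen (g • interior ((K ∩ V) • B)) := isOpen_interior.smul g
      have hmem : g • b ∈ g • interior ((K ∩ V) • B) := Set.smul_mem_smul_set hb'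
      have hss : g • interior ((K ∩ V) • B) ⊆ K • T :=
        (Set.smul_set_mono interior_subset).trans hsub
      exact mem_interior.2 ⟨_, hss, hopen, hmem⟩
  -- Goal (i)
  have hgoal1 : T ∩ interior (K • T) = B := by
    apply Set.Subset.antisymm
    · rintro x ⟨hxT, hxI⟩
      exact lemPa 1 h1K x hxT (by rwa [one_smul])
    · intro x hx
      refine ⟨hBT hx, ?_⟩
      rw [hIntEq]
      exact ⟨1, h1Ki, x, hx, one_smul _ _⟩
  -- `S \ B` is closed and `T ∩ closure (S \ B) = T \ B`
  have hSB : S \ B = S ∩ closure (S \ T) := by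
    rw [hBU, Set.diff_self_inter, Set.diff_eq, hU, compl_compl]
  have hSBc : IsClosed (S \ B) := by
    rw [hSB]; exact hScl.inter isClosed_closure
  have h2 : T ∩ closure (S \ B) = T \ B := by
    rw [hSBc.closure_eq]
    ext x
    constructor
    · rintro ⟨hxT, -, hxnB⟩; exact ⟨hxT, hxnB⟩
    · rintro ⟨hxT, hxnB⟩; exact ⟨hxT, hTS hxT, hxnB⟩
  -- tube compactness
  have hKT : IsCompact (K • T) := by
    rw [← Set.image_smul_prod]
    exact (hKc.prod hTc).image continuous_smul
  have hgoal3 : frontier (K • T) = (K • T) \ (interior K • B) := by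
    rw [hKT.isClosed.frontier_eq, hIntEq]
  refine ⟨hgoal1, ?_, hgoal3, ?_⟩
  · rw [hgoal1, h2]
  · rw [hgoal3, h2, hKc.isClosed.frontier_eq]
    apply Set.Subset.antisymm
    · rintro x ⟨hxKT, hxn⟩
      obtain ⟨g, hg, u, hu, rfl⟩ := hxKT
      by_cases hgI : g ∈ interior K
      · by_cases huB : u ∈ B
        · exact absurd (Set.smul_mem_smul hgI huB) hxn
        · exact Or.inr (Set.smul_mem_smul hg ⟨hu, huB⟩)
      · exact Or.inl (Set.smul_mem_smul ⟨hg, hgI⟩ hu)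
    · have hsub2 : interior K • B ⊆ interior (K • T) := hIntEq.symm.subset
      rintro x (⟨g, ⟨hgK, hgnI⟩, u, hu, rfl⟩ | ⟨g, hgK, u, ⟨huT, hunB⟩, rfl⟩)
      · refine ⟨Set.smul_mem_smul hgK hu, fun hmem => ?_⟩
        exact hgnI (lemPb g hgK u hu (hsub2 hmem))
      · refine ⟨Set.smul_mem_smul hgK huT, fun hmem => ?_⟩
        exact hunB (lemPa g hgK u huT (hsub2 hmem))
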